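/- For all real x > 0, the function f(x) = ln(1+x) / ((1+x)^{1/x} · x) is strictly decreasing on (0, ∞), and its limit as x → 0⁺ equals 1/e. -/

import Mathlib

open Real Filter Set

private lemma g_anti : StrictAntiOn (fun x : ℝ => Real.log (1 + x) / x) (Set.Ioi 0) := by
  intro a ha b hb hab
  simp only [Set.mem_Ioi] at ha hb
  show Real.log (1 + b) / b < Real.log (1 + a) / a
  have key := strictConcaveOn_log_Ioi.secant_strict_mono (Set.mem_Ioi.2 one_pos)
    (Set.mem_Ioi.2 (by linarith : (0:ℝ) < 1 + a))
    (Set.mem_Ioi.2 (by linarith : (0:ℝ) < 1 + b))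
    (by intro h; linarith : (1:ℝ) + a ≠ 1)
    (by intro h; linarith : (1:ℝ) + b ≠ 1)
    (by linarith)
  simpa [Real.log_one, add_sub_cancel_left] using key

private lemma h_mono : StrictMonoOn (fun t : ℝ => t * Real.exp (-t)) (Set.Icc 0 1) := by
  have hderiv : ∀ t : ℝ, HasDerivAt (fun s : ℝ => s * Real.exp (-s))
      ((1 - t) * Real.exp (-t)) t := by
    intro t
    have h1 : HasDerivAt (fun s : ℝ => Real.exp (-s)) (Real.exp (-t) * (-1)) t :=
      (Real.hasDerivAt_exp (-t)).comp t ((hasDerivAt_id t).neg)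
    have : HasDerivAt (fun s : ℝ => s * Real.exp (-s)) _ t := (hasDerivAt_id t).mul h1
    convert this using 1
    simp only [id_eq]
    ring
  apply strictMonoOn_of_deriv_pos (convex_Icc 0 1)
  · exact (continuous_id.mul (Real.continuous_exp.comp continuous_neg)).continuousOn
  · intro t ht
    rw [interior_Icc] at ht
    rw [(hderiv t).deriv]
    exact mul_pos (by linarith [ht.2]) (Real.exp_pos _)

private lemma g_mem (x : ℝ) (hx : 0 < x) :
    Real.log (1 + x) / x ∈ Set.Icc (0:ℝ) 1 := by
  constructor
  · exact le_of_lt (div_pos (Real.log_pos (by linarith)) hx)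
  · rw [div_le_one hx]
    have := Real.log_lt_sub_one_of_pos (by linarith : (0:ℝ) < 1 + x)
      (by intro h; linarith : (1:ℝ) + x ≠ 1)
    linarith

private lemma f_eq (x : ℝ) (hx : 0 < x) :
    Real.log (1 + x) / (Real.exp ((1 / x) * Real.log (1 + x)) * x) =
      (Real.log (1 + x) / x) * Real.exp (-(Real.log (1 + x) / x)) := by
  have h1 : (1 / x) * Real.log (1 + x) = Real.log (1 + x) / x := by ring
  rw [h1, Real.exp_neg, mul_comm, ← div_div, div_eq_mul_inv (Real.log (1 + x) / x)]

theorem stmt_0 :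
    StrictAntiOn (fun x : ℝ => Real.log (1 + x) / (Real.exp ((1 / x) * Real.log (1 + x)) * x))
      (Set.Ioi 0) ∧
    Filter.Tendsto (fun x : ℝ => Real.log (1 + x) / (Real.exp ((1 / x) * Real.log (1 + x)) * x))
      (nhdsWithin 0 (Set.Ioi 0)) (nhds (1 / Real.exp 1)) := by
  constructor
  · intro a ha b hb hab
    simp only [Set.mem_Ioi] at ha hb
    have hga := g_mem a ha
    have hgb := g_mem b hb
    have hlt : Real.log (1 + b) / b < Real.log (1 + a) / a :=
      g_anti (Set.mem_Ioi.2 ha) (Set.mem_Ioi.2 hb) hab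
    have := h_mono hgb hga hlt
    simpa only [f_eq a ha, f_eq b hb] using this
  · have hg : Tendsto (fun x : ℝ => Real.log (1 + x) / x)
        (nhdsWithin 0 (Set.Ioi 0)) (nhds 1) := by
      have hlog : HasDerivAt Real.log 1 1 := by
        simpa using Real.hasDerivAt_log one_ne_zero
      rw [hasDerivAt_iff_tendsto_slope] at hlog
      have hmap : Tendsto (fun x : ℝ => 1 + x) (nhdsWithin 0 (Set.Ioi 0))
          (nhdsWithin 1 {1}ᶜ) := by
        apply tendsto_nhdsWithin_of_tendsto_nhds_of_eventually_within
        · have : Tendsto (fun x : ℝ => 1 + x) (nhds 0) (nhds 1) := by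
            simpa using (continuous_add_left (1:ℝ)).tendsto (0:ℝ)
          exact this.mono_left nhdsWithin_le_nhds
        · filter_upwards [self_mem_nhdsWithin] with x hx
          simp only [Set.mem_Ioi] at hx
          simp only [Set.mem_compl_iff, Set.mem_singleton_iff]
          intro h
          linarith
      have := hlog.comp hmap
      refine this.congr fun x => ?_
      simp [slope_def_field, Real.log_one]
    have hcont : Tendsto (fun t : ℝ => t * Real.exp (-t)) (nhds 1)
        (nhds (1 * Real.exp (-1))) :=
      ((continuous_id.mul (Real.continuous_exp.comp continuous_neg)).tendsto 1)
    have hcomp := hcont.comp hg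
    have hval : 1 * Real.exp (-1) = 1 / Real.exp 1 := by
      rw [one_mul, Real.exp_neg, one_div]
    rw [hval] at hcomp
    refine hcomp.congr' ?_
    filter_upwards [self_mem_nhdsWithin] with x hx
    simp only [Set.mem_Ioi] at hx
    exact (f_eq x hx).symm
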